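/- Every nonempty finite subset A of an abelian group G is an asymptotic (r, ℓ)-approximate group for suitable r and ℓ: for every integer r ≥ 1 there exist ℓ and h₀ such that for each h ≥ h₀ there is a set X_h ⊆ G with |X_h| ≤ ℓ and r·(hA) ⊆ X_h + hA. -/

import Mathlib

lemma sum_rep {G : Type*} [AddCommGroup G] (A : Finset G) :
    ∀ (h : ℕ) (w : ↥A → ℕ), (∑ a : ↥A, w a) = h →
    ∃ f : Fin h → G, (∀ i, f i ∈ A) ∧ ∑ i, f i = ∑ a : ↥A, w a • (a : G) := by
  classical
  intro h
  induction h with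
  | zero =>
    intro w hw
    refine ⟨fun i => i.elim0, fun i => i.elim0, ?_⟩
    rw [Finset.sum_eq_zero, Finset.sum_eq_zero]
    · intro a _
      have : w a = 0 := by
        by_contra hc
        have h1 : 0 < ∑ a : ↥A, w a :=
          Finset.sum_pos' (fun b _ => Nat.zero_le _)
            ⟨a, Finset.mem_univ a, Nat.pos_of_ne_zero hc⟩
        omega
      simp [this]
    · intro i _; exact i.elim0
  | succ n ih =>
    intro w hw
    have hex : ∃ a, w a ≠ 0 := by
      by_contra hc
      push_neg at hc
      rw [Finset.sum_eq_zero (fun a _ => hc a)] at hw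
      omega
    obtain ⟨a₀, ha₀⟩ := hex
    set w' : ↥A → ℕ := fun a => if a = a₀ then w a - 1 else w a with hw'def
    have hsplit : ∀ (v : ↥A → ℕ), ∑ a : ↥A, v a
        = v a₀ + ∑ a ∈ Finset.univ.erase a₀, v a := by
      intro v
      rw [Finset.add_sum_erase _ v (Finset.mem_univ a₀)]
    have hw'sum : ∑ a : ↥A, w' a = n := by
      rw [hsplit w']
      have h1 := hsplit w
      have h2 : ∑ a ∈ Finset.univ.erase a₀, w' a = ∑ a ∈ Finset.univ.erase a₀, w a := by
        refine Finset.sum_congr rfl fun a ha => ?_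
        have := Finset.ne_of_mem_erase ha
        simp [hw'def, this]
      rw [h2]
      have : w' a₀ = w a₀ - 1 := by simp [hw'def]
      omega
    obtain ⟨f, hf, hsum⟩ := ih w' hw'sum
    refine ⟨Fin.cons (a₀ : G) f, ?_, ?_⟩
    · intro i
      refine Fin.cases ?_ ?_ i
      · simpa using a₀.2
      · intro j; simpa using hf j
    · rw [Fin.sum_univ_succ]
      simp only [Fin.cons_zero, Fin.cons_succ]
      rw [hsum]
      have hG : ∀ (v : ↥A → ℕ), ∑ a : ↥A, v a • (a : G)
          = v a₀ • (a₀ : G) + ∑ a ∈ Finset.univ.erase a₀, v a • (a : G) := by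
        intro v
        rw [Finset.add_sum_erase _ (fun a => v a • (a : G)) (Finset.mem_univ a₀)]
      rw [hG w', hG w]
      have h2 : ∑ a ∈ Finset.univ.erase a₀, w' a • (a : G)
          = ∑ a ∈ Finset.univ.erase a₀, w a • (a : G) := by
        refine Finset.sum_congr rfl fun a ha => ?_
        have := Finset.ne_of_mem_erase ha
        simp [hw'def, this]
      rw [h2]
      have h3 : w a₀ • (a₀ : G) = (a₀ : G) + (w a₀ - 1) • (a₀ : G) := by
        have : w a₀ = (w a₀ - 1) + 1 := by omega
        rw [this, add_nsmul, one_nsmul]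
        exact add_comm _ _
      have h4 : w' a₀ = w a₀ - 1 := by simp [hw'def]
      rw [h4, h3]
      abel

/-- Nathanson: every nonempty finite subset of an abelian group is an asymptotic
(r, ℓ)-approximate group. -/
theorem asymptotic_approximate_group (G : Type*) [AddCommGroup G]
    (A : Finset G) (hA : A.Nonempty) :
    ∀ r : ℕ, 1 ≤ r → ∃ ℓ : ℕ, ∃ h₀ : ℕ, ∀ h ≥ h₀, ∃ X : Finset G,
      X.card ≤ ℓ ∧
      {z : G | ∃ g : Fin r → G,
          (∀ j, g j ∈ {y : G | ∃ f : Fin h → G, (∀ i, f i ∈ A) ∧ ∑ i, f i = y}) ∧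
          ∑ j, g j = z} ⊆
        {z : G | ∃ x ∈ X, ∃ y ∈ {y : G | ∃ f : Fin h → G, (∀ i, f i ∈ A) ∧ ∑ i, f i = y},
          z = x + y} := by
  classical
  intro r hr
  have hKpos : 0 < A.card := Finset.card_pos.mpr hA
  set K := A.card with hKdef
  obtain ⟨astar, hastar⟩ := hA
  refine ⟨(r * K + 1) ^ K, 1, fun h hh => ?_⟩
  set m := (h + K - 1) / K with hmdef
  have hm1 : 0 < m := Nat.div_pos (by omega) hKpos
  have e1 : K * m ≤ h + K - 1 := Nat.le.intro (Nat.div_add_mod (h + K - 1) K)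
  have e2 : h + K - 1 < K * m + K := by
    conv_lhs => rw [← Nat.div_add_mod (h + K - 1) K]
    exact Nat.add_lt_add_left (Nat.mod_lt _ hKpos) _
  have e3 : h ≤ K * m := by
    set P := K * m with hPdef
    omega
  have e4 : K * (m - 1) < h := by
    have hq : K * (m - 1) + K = K * m := by
      have hmm : m - 1 + 1 = m := Nat.succ_pred_eq_of_pos hm1
      calc K * (m - 1) + K = K * ((m - 1) + 1) := (Nat.mul_succ K (m - 1)).symm
        _ = K * m := by rw [hmm]
    set P := K * m with hPdef
    set Q := K * (m - 1) with hQdef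
    omega
  set F : (↥A → ℕ) → G := fun v =>
    (∑ a : ↥A, (m * v a) • (a : G)) - ((m * (∑ a : ↥A, v a) + h - r * h) • astar)
    with hFdef
  refine ⟨(Fintype.piFinset fun _ : ↥A => Finset.range (r * K + 1)).image F, ?_, ?_⟩
  · refine Finset.card_image_le.trans ?_
    rw [Fintype.card_piFinset]
    simp [Fintype.card_coe]
    exact le_rfl
  · rintro z ⟨g, hg, hz⟩
    choose f hfA hfsum using hg
    set F2 : Fin r × Fin h → ↥A := fun p => ⟨f p.1 p.2, hfA p.1 p.2⟩ with hF2def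
    set c : ↥A → ℕ := fun a => (Finset.univ.filter fun p => F2 p = a).card with hcdef
    have hcsum : ∑ a : ↥A, c a = r * h := by
      have := Finset.card_eq_sum_card_fiberwise
        (f := F2) (s := Finset.univ) (t := Finset.univ)
        (fun p _ => Finset.mem_univ (F2 p))
      simp only [Finset.card_univ, Fintype.card_prod, Fintype.card_fin] at this
      rw [← this]
    have hz2 : z = ∑ a : ↥A, c a • (a : G) := by
      rw [← hz]
      have s1 : ∑ j, g j = ∑ p : Fin r × Fin h, (F2 p : G) := by
        rw [Fintype.sum_prod_type]
        exact Finset.sum_congr rfl fun j _ => (hfsum j).symm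
      rw [s1, ← Finset.sum_fiberwise' Finset.univ F2 (fun a => (a : G))]
      refine Finset.sum_congr rfl fun a _ => ?_
      rw [Finset.sum_const]
    set q : ↥A → ℕ := fun a => c a / m with hqdef
    set y' : ↥A → ℕ := fun a => c a % m with hy'def
    have hca : ∀ a, c a = m * q a + y' a := fun a => (Nat.div_add_mod (c a) m).symm
    set s := ∑ a : ↥A, y' a with hsdef
    have hs_le : s ≤ K * (m - 1) := by
      calc s ≤ ∑ _a : ↥A, (m - 1) := by
              refine Finset.sum_le_sum fun a _ => ?_
              have := Nat.mod_lt (c a) hm1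
              simp only [hy'def]
              omega
        _ = K * (m - 1) := by
              rw [Finset.sum_const, Finset.card_univ, Fintype.card_coe, smul_eq_mul]
    have hsh : s < h := lt_of_le_of_lt hs_le e4
    have hmq : m * (∑ a : ↥A, q a) + s = r * h := by
      calc m * (∑ a : ↥A, q a) + s
          = (∑ a : ↥A, m * q a) + ∑ a : ↥A, y' a := by rw [Finset.mul_sum]
        _ = ∑ a : ↥A, (m * q a + y' a) := Finset.sum_add_distrib.symm
        _ = ∑ a : ↥A, c a := Finset.sum_congr rfl fun a _ => (hca a).symm
        _ = r * h := hcsum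
    have hq_le : ∑ a : ↥A, q a ≤ r * K := by
      have h5 : m * (∑ a : ↥A, q a) ≤ m * (r * K) := by
        calc m * (∑ a : ↥A, q a) ≤ r * h := by omega
          _ ≤ r * (K * m) := Nat.mul_le_mul_left r e3
          _ = m * (r * K) := by ring
      exact Nat.le_of_mul_le_mul_left h5 hm1
    refine ⟨F q, Finset.mem_image_of_mem _ ?_, ?_⟩
    · rw [Fintype.mem_piFinset]
      intro a
      rw [Finset.mem_range]
      have : q a ≤ ∑ b : ↥A, q b :=
        Finset.single_le_sum (fun b _ => Nat.zero_le _) (Finset.mem_univ a)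
      omega
    · set astar' : ↥A := ⟨astar, hastar⟩ with hastar'def
      refine ⟨(∑ a : ↥A, y' a • (a : G)) + (h - s) • astar, ?_, ?_⟩
      · obtain ⟨ff, hffA, hffsum⟩ := sum_rep A h
          (fun a => y' a + if a = astar' then h - s else 0) (by
            rw [Finset.sum_add_distrib, Finset.sum_ite_eq' Finset.univ astar'
              (fun _ => h - s)]
            simp only [Finset.mem_univ, if_true]
            omega)
        refine ⟨ff, hffA, ?_⟩
        rw [hffsum]
        have step : ∀ a : ↥A, (y' a + if a = astar' then h - s else 0) • (a : G)
            = y' a • (a : G) + (if a = astar' then (h - s) • (astar : G) else 0) := by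
          intro a
          rw [add_nsmul]
          congr 1
          split_ifs with hcond
          · rw [hcond]
          · exact zero_nsmul _
        rw [Finset.sum_congr rfl fun a _ => step a, Finset.sum_add_distrib,
          Finset.sum_ite_eq' Finset.univ astar' (fun _ => (h - s) • (astar : G))]
        simp only [Finset.mem_univ, if_true]
      · -- z = F q + (∑ y' a • a + (h - s) • astar)
        have hnat : m * (∑ a : ↥A, q a) + h - r * h = h - s := by
          set P := m * (∑ a : ↥A, q a) with hPdef
          omega
        rw [hz2, hFdef]
        simp only []
        rw [hnat]
        have hzc : ∑ a : ↥A, c a • (a : G)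
            = (∑ a : ↥A, (m * q a) • (a : G)) + ∑ a : ↥A, y' a • (a : G) := by
          rw [← Finset.sum_add_distrib]
          refine Finset.sum_congr rfl fun a _ => ?_
          rw [← add_nsmul, ← hca a]
        rw [hzc]
        abel
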